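/- arXiv:2305.04131 — 2 statements merged into one kernel-verified Lean document; each statement's English description precedes it below -/
import Mathlib

section
/- Let $\Delta(x) = \prod_{1\le i<j\le N}(x_i-x_j)(x_i+x_j)\prod_{k=1}^N x_k$ for $x\in\mathbb{R}^N$ and let $\rho_N = \sum_{i=1}^N(N-i+\tfrac12)e_i$. Then $\frac{1}{N^2}\log \Delta(\rho_N) = \log N + \log 2 - \tfrac32 + o(1)$ as $N\to\infty$. -/
open Filter

/-- Half-sum of positive roots of `B_N`: `(ρ_N)_i = N - i + 1/2` (one-indexed),
`= N - i - 1/2` for zero-indexed `i : Fin N`. -/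
noncomputable def rhoBvec (N : ℕ) : Fin N → ℝ := fun i => (N : ℝ) - (i : ℝ) - 1 / 2

/-- `Δ(x) = ∏_{i<j}(xᵢ-xⱼ)(xᵢ+xⱼ) ∏ₖ xₖ`, the product of positive roots of `B_N`
evaluated at `x`, evaluated at `x = ρ_N`. -/
noncomputable def DeltaBrho (N : ℕ) : ℝ :=
  (∏ p ∈ Finset.univ.filter (fun p : Fin N × Fin N => p.1 < p.2),
      ((rhoBvec N p.1 - rhoBvec N p.2) * (rhoBvec N p.1 + rhoBvec N p.2))) *
    ∏ k : Fin N, rhoBvec N k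

section AuxProofs
open Finset Real

lemma pairprod (N : ℕ) (g : ℕ → ℕ → ℝ) :
    (∏ p ∈ Finset.univ.filter (fun p : Fin N × Fin N => p.1 < p.2), g p.1 p.2)
      = ∏ i ∈ range N, ∏ j ∈ range N, if i < j then g i j else 1 := by
  rw [Finset.prod_filter, Fintype.prod_prod_type]
  simp only [Fin.lt_def]
  rw [← Fin.prod_univ_eq_prod_range (fun i => ∏ j ∈ range N, if i < j then g i j else 1) N]
  exact Finset.prod_congr rfl fun x _ =>
    Fin.prod_univ_eq_prod_range (fun j => if (x:ℕ) < j then g x j else 1) N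

noncomputable def Paux (N : ℕ) : ℝ :=
  (∏ i ∈ range N, ∏ j ∈ range N,
      if i < j then ((j:ℝ) - i) * ((i:ℝ) + j + 1) else 1) *
    ∏ k ∈ range N, ((k:ℝ) + 1/2)

lemma cast_reflect {N k : ℕ} (hk : k < N) : ((N - 1 - k : ℕ) : ℝ) = (N:ℝ) - 1 - k := by
  have h : N - 1 - k = N - (1+k) := by omega
  rw [h, Nat.cast_sub (by omega)]; push_cast; ring

lemma Delta_eq_Paux (N : ℕ) : DeltaBrho N = Paux N := by
  simp only [DeltaBrho, Paux, rhoBvec]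
  congr 1
  · rw [pairprod N (fun i j => ((N:ℝ) - i - 1/2 - ((N:ℝ) - j - 1/2)) *
        ((N:ℝ) - i - 1/2 + ((N:ℝ) - j - 1/2)))]
    have step1 : (∏ i ∈ range N, ∏ j ∈ range N,
        if i < j then ((N:ℝ) - i - 1/2 - ((N:ℝ) - j - 1/2)) *
          ((N:ℝ) - i - 1/2 + ((N:ℝ) - j - 1/2)) else 1)
        = ∏ i ∈ range N, ∏ j ∈ range N,
            (if j < i then ((i:ℝ) - j) * ((j:ℝ) + i + 1) else 1) := by
      rw [← Finset.prod_range_reflect]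
      refine Finset.prod_congr rfl fun i hi => ?_
      rw [← Finset.prod_range_reflect]
      refine Finset.prod_congr rfl fun j hj => ?_
      simp only [Finset.mem_range] at hi hj
      by_cases h : j < i
      · rw [if_pos (by omega : N - 1 - i < N - 1 - j), if_pos h,
          cast_reflect hi, cast_reflect hj]
        ring
      · rw [if_neg (by omega : ¬ N - 1 - i < N - 1 - j), if_neg h]
    rw [step1, Finset.prod_comm]
  · rw [Fin.prod_univ_eq_prod_range (fun k => (N:ℝ) - k - 1/2)]
    rw [← Finset.prod_range_reflect]
    apply Finset.prod_congr rfl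
    intro k hk
    rw [cast_reflect (Finset.mem_range.mp hk)]
    ring

lemma asc_prod (n k : ℕ) : ∏ i ∈ range k, (n + i) = n.ascFactorial k := by
  induction k with
  | zero => simp
  | succ k ih => rw [Finset.prod_range_succ, ih, Nat.ascFactorial_succ, mul_comm]

lemma prodNsub (N : ℕ) : ∏ i ∈ range N, (N - i) = N.factorial := by
  rw [← Finset.prod_range_reflect, ← Finset.prod_range_add_one_eq_factorial]
  exact Finset.prod_congr rfl fun i hi => by
    simp only [Finset.mem_range] at hi; omega

lemma newfactor (N : ℕ) :
    (∏ i ∈ range N, (((N:ℝ) - i) * ((i:ℝ) + N + 1))) * ((N:ℝ) + 1/2)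
      = ((2*N+1).factorial : ℝ) / 2 := by
  have h1 : (∏ i ∈ range N, (N - i)) * ∏ i ∈ range N, (N + 1 + i) = (2*N).factorial := by
    rw [prodNsub, asc_prod, Nat.factorial_mul_ascFactorial, two_mul]
  have h2 : ∏ i ∈ range N, (((N:ℝ) - i) * ((i:ℝ) + N + 1))
      = (((2*N).factorial : ℕ) : ℝ) := by
    rw [← h1]
    push_cast
    rw [Finset.prod_mul_distrib]
    congr 1
    · exact Finset.prod_congr rfl fun i hi => by
        rw [Nat.cast_sub (le_of_lt (Finset.mem_range.mp hi))]
    · exact Finset.prod_congr rfl fun i hi => by push_cast; ring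
  rw [h2]
  have h3 : ((2*N+1).factorial : ℝ) = (2*N+1) * ((2*N).factorial : ℝ) := by
    rw [Nat.factorial_succ]; push_cast; ring
  rw [h3]; push_cast; ring

lemma Paux_eq (N : ℕ) :
    Paux N = (∏ j ∈ range N, (((2*(j+1)).factorial : ℕ) : ℝ)) / (4^N * N.factorial) := by
  induction N with
  | zero => simp [Paux]
  | succ N ih =>
    have step : Paux (N+1) = Paux N *
        ((∏ i ∈ range N, (((N:ℝ) - i) * ((i:ℝ) + N + 1))) * ((N:ℝ) + 1/2)) := by
      simp only [Paux]
      rw [Finset.prod_range_succ (fun i => ∏ j ∈ range (N+1),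
            if i < j then ((j:ℝ) - i) * ((i:ℝ) + j + 1) else 1)]
      rw [Finset.prod_range_succ (fun k => (k:ℝ) + 1/2)]
      have hN : (∏ j ∈ range (N+1), if N < j then ((j:ℝ) - N) * ((N:ℝ) + j + 1) else 1) = 1 := by
        apply Finset.prod_eq_one
        intro j hj
        rw [if_neg (by simp only [Finset.mem_range] at hj; omega)]
      have hrows : (∏ i ∈ range N, ∏ j ∈ range (N+1),
            if i < j then ((j:ℝ) - i) * ((i:ℝ) + j + 1) else 1)
          = (∏ i ∈ range N, ∏ j ∈ range N,
              if i < j then ((j:ℝ) - i) * ((i:ℝ) + j + 1) else 1) *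
            ∏ i ∈ range N, (((N:ℝ) - i) * ((i:ℝ) + N + 1)) := by
        rw [← Finset.prod_mul_distrib]
        refine Finset.prod_congr rfl fun i hi => ?_
        rw [Finset.prod_range_succ, if_pos (Finset.mem_range.mp hi)]
      rw [hN, hrows]
      ring
    rw [step, newfactor, ih]
    have hf : ((2*(N+1)).factorial : ℝ) = (2*(N+1)) * ((2*N+1).factorial : ℝ) := by
      have : 2*(N+1) = (2*N+1) + 1 := by ring
      rw [this, Nat.factorial_succ]; push_cast; ring
    rw [Finset.prod_range_succ]
    have h4 : (0:ℝ) < 4 ^ N := by positivity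
    have hNf : (0:ℝ) < (N.factorial : ℝ) := by exact_mod_cast N.factorial_pos
    rw [Nat.factorial_succ]
    push_cast
    rw [hf]
    have h5 : ((2*N+1).factorial : ℝ) = (2*(N:ℝ)+1) * ((2*N).factorial : ℝ) := by
      rw [Nat.factorial_succ]; push_cast; ring
    field_simp
    rw [h5, pow_succ, Nat.factorial_succ]
    push_cast
    ring

lemma log_fact_lb : ∀ n : ℕ, 1 ≤ n →
    (n:ℝ) * Real.log n - n + 1 ≤ Real.log (n.factorial) := by
  intro n hn
  induction n, hn using Nat.le_induction with
  | base => simp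
  | succ n hn ih =>
    have hx : (0:ℝ) < n := by exact_mod_cast hn
    have h1 : Real.log (((n:ℝ)+1)/n) ≤ ((n:ℝ)+1)/n - 1 :=
      Real.log_le_sub_one_of_pos (by positivity)
    rw [Real.log_div (by positivity) (ne_of_gt hx)] at h1
    have e : ((n:ℝ)+1)/n - 1 = 1/n := by field_simp; ring
    rw [e] at h1
    have hA : (n:ℝ) * (Real.log ((n:ℝ)+1) - Real.log n) ≤ 1 := by
      have := mul_le_mul_of_nonneg_left h1 hx.le
      rwa [mul_one_div, div_self (ne_of_gt hx)] at this
    have hfact : Real.log ((n+1).factorial) = Real.log ((n:ℝ)+1) + Real.log (n.factorial) := by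
      rw [Nat.factorial_succ]
      push_cast
      rw [Real.log_mul (by positivity) (by exact_mod_cast n.factorial_pos.ne')]
    push_cast
    rw [hfact]
    push_cast at ih
    nlinarith [ih]

lemma log_fact_ub : ∀ n : ℕ, 1 ≤ n →
    Real.log (n.factorial) ≤ (n:ℝ) * Real.log n - n + 1 + Real.log n := by
  intro n hn
  induction n, hn using Nat.le_induction with
  | base => simp
  | succ n hn ih =>
    have hx : (0:ℝ) < n := by exact_mod_cast hn
    have h1 : Real.log ((n:ℝ)/((n:ℝ)+1)) ≤ (n:ℝ)/((n:ℝ)+1) - 1 :=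
      Real.log_le_sub_one_of_pos (by positivity)
    rw [Real.log_div (ne_of_gt hx) (by positivity)] at h1
    have e : (n:ℝ)/((n:ℝ)+1) - 1 = -(1/((n:ℝ)+1)) := by field_simp; ring
    rw [e] at h1
    have hB : ((n:ℝ)+1) * (Real.log n - Real.log ((n:ℝ)+1)) ≤ -1 := by
      have := mul_le_mul_of_nonneg_left h1 (by positivity : (0:ℝ) ≤ (n:ℝ)+1)
      rw [mul_neg, mul_one_div, div_self (by positivity : ((n:ℝ)+1) ≠ 0)] at this
      linarith
    have hfact : Real.log ((n+1).factorial) = Real.log ((n:ℝ)+1) + Real.log (n.factorial) := by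
      rw [Nat.factorial_succ]
      push_cast
      rw [Real.log_mul (by positivity) (by exact_mod_cast n.factorial_pos.ne')]
    push_cast
    rw [hfact]
    push_cast at ih
    nlinarith [ih, hB]

noncomputable def Tsum (N : ℕ) : ℝ := ∑ j ∈ range N, ((j:ℝ)+1) * Real.log ((j:ℝ)+1)
noncomputable def fmain (N : ℕ) : ℝ := (N:ℝ)^2/2 * Real.log N - (N:ℝ)^2/4

lemma log_succ_mono (n : ℕ) : Real.log n ≤ Real.log ((n:ℝ)+1) := by
  rcases Nat.eq_zero_or_pos n with h | h
  · simp [h]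
  · exact Real.log_le_log (by exact_mod_cast h) (by linarith)

lemma step_lb (n : ℕ) : fmain (n+1) - fmain n ≤ ((n:ℝ)+1) * Real.log ((n:ℝ)+1) := by
  rcases Nat.eq_zero_or_pos n with h | h
  · subst h; simp [fmain]
  · have hx : (0:ℝ) < n := by exact_mod_cast h
    have h1 : Real.log (((n:ℝ)+1)/n) ≤ ((n:ℝ)+1)/n - 1 :=
      Real.log_le_sub_one_of_pos (by positivity)
    rw [Real.log_div (by positivity) (ne_of_gt hx)] at h1
    have e : ((n:ℝ)+1)/n - 1 = 1/n := by field_simp; ring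
    rw [e] at h1
    have hA : (n:ℝ) * (Real.log ((n:ℝ)+1) - Real.log n) ≤ 1 := by
      have := mul_le_mul_of_nonneg_left h1 hx.le
      rwa [mul_one_div, div_self (ne_of_gt hx)] at this
    have hL : (0:ℝ) ≤ Real.log ((n:ℝ)+1) := Real.log_nonneg (by linarith)
    simp only [fmain]
    push_cast
    nlinarith [mul_le_mul_of_nonneg_left hA (by positivity : (0:ℝ) ≤ (n:ℝ)/2)]

lemma step_ub (n : ℕ) :
    ((n:ℝ)+1) * Real.log ((n:ℝ)+1)
      ≤ fmain (n+1) - fmain n + Real.log ((n:ℝ)+1) + 1 := by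
  rcases Nat.eq_zero_or_pos n with h | h
  · subst h; simp [fmain]; norm_num
  · have hx : (0:ℝ) < n := by exact_mod_cast h
    have h1 : Real.log ((n:ℝ)/((n:ℝ)+1)) ≤ (n:ℝ)/((n:ℝ)+1) - 1 :=
      Real.log_le_sub_one_of_pos (by positivity)
    rw [Real.log_div (ne_of_gt hx) (by positivity)] at h1
    have e : (n:ℝ)/((n:ℝ)+1) - 1 = -(1/((n:ℝ)+1)) := by field_simp; ring
    rw [e] at h1
    have hB : (1:ℝ) ≤ ((n:ℝ)+1) * (Real.log ((n:ℝ)+1) - Real.log n) := by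
      have := mul_le_mul_of_nonneg_left h1 (by positivity : (0:ℝ) ≤ (n:ℝ)+1)
      rw [mul_neg, mul_one_div, div_self (by positivity : ((n:ℝ)+1) ≠ 0)] at this
      nlinarith
    have hmono := log_succ_mono n
    have hL : (0:ℝ) ≤ Real.log ((n:ℝ)+1) := Real.log_nonneg (by linarith)
    have hn1 : (1:ℝ) ≤ (n:ℝ) := by exact_mod_cast h
    simp only [fmain]
    push_cast
    nlinarith [mul_le_mul_of_nonneg_left hB (by linarith : (0:ℝ) ≤ (n:ℝ)-1), hmono, hL]

lemma Tsum_lb (N : ℕ) : fmain N ≤ Tsum N := by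
  induction N with
  | zero => simp [fmain, Tsum]
  | succ N ih =>
    have := step_lb N
    simp only [Tsum, Finset.sum_range_succ] at *
    push_cast at *
    linarith

lemma Tsum_ub (N : ℕ) : Tsum N ≤ fmain N + N * (Real.log N + 1) := by
  induction N with
  | zero => simp [fmain, Tsum]
  | succ N ih =>
    have h1 := step_ub N
    have h2 := log_succ_mono N
    have h3 : (N:ℝ) * Real.log N ≤ (N:ℝ) * Real.log ((N:ℝ)+1) :=
      mul_le_mul_of_nonneg_left h2 (by positivity)
    simp only [Tsum, Finset.sum_range_succ] at *
    push_cast at *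
    linarith

lemma gauss (N : ℕ) : ∑ j ∈ range N, ((j:ℝ)+1) = (N:ℝ)*((N:ℝ)+1)/2 := by
  induction N with
  | zero => simp
  | succ N ih => rw [Finset.sum_range_succ, ih]; push_cast; ring

lemma split_sum (N : ℕ) :
    ∑ j ∈ range N, (2*((j:ℝ)+1)*(Real.log 2 + Real.log ((j:ℝ)+1)) - 2*((j:ℝ)+1) + 1)
      = (N:ℝ)*((N:ℝ)+1)*Real.log 2 + 2 * Tsum N - (N:ℝ)^2 := by
  have h : ∀ j : ℕ, (2*((j:ℝ)+1)*(Real.log 2 + Real.log ((j:ℝ)+1)) - 2*((j:ℝ)+1) + 1)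
      = (2*Real.log 2 - 2)*((j:ℝ)+1) + 2*(((j:ℝ)+1)*Real.log ((j:ℝ)+1)) + 1 := fun j => by ring
  simp_rw [h]
  rw [Finset.sum_add_distrib, Finset.sum_add_distrib, ← Finset.mul_sum, ← Finset.mul_sum, gauss]
  simp only [Finset.sum_const, Finset.card_range, nsmul_eq_mul, mul_one, Tsum]
  ring

noncomputable def S1 (N : ℕ) : ℝ := ∑ j ∈ range N, Real.log (((2*(j+1)).factorial : ℕ) : ℝ)

lemma logtwo (j : ℕ) :
    Real.log (2*((j:ℝ)+1)) = Real.log 2 + Real.log ((j:ℝ)+1) :=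
  Real.log_mul two_ne_zero (by positivity)


lemma S1_lb (N : ℕ) :
    (N:ℝ)*((N:ℝ)+1)*Real.log 2 + 2 * Tsum N - (N:ℝ)^2 ≤ S1 N := by
  rw [← split_sum]
  apply Finset.sum_le_sum
  intro j _
  have h := log_fact_lb (2*(j+1)) (by omega)
  have hc : ((2*(j+1) : ℕ) : ℝ) = 2*((j:ℝ)+1) := by push_cast; ring
  rw [hc, logtwo] at h
  linarith

lemma S1_ub (N : ℕ) :
    S1 N ≤ (N:ℝ)*((N:ℝ)+1)*Real.log 2 + 2 * Tsum N - (N:ℝ)^2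
        + (N:ℝ)*(Real.log 2 + Real.log N) := by
  have h1 : S1 N ≤ ∑ j ∈ range N,
      ((2*((j:ℝ)+1)*(Real.log 2 + Real.log ((j:ℝ)+1)) - 2*((j:ℝ)+1) + 1)
        + (Real.log 2 + Real.log N)) := by
    apply Finset.sum_le_sum
    intro j hj
    have h := log_fact_ub (2*(j+1)) (by omega)
    have hc : ((2*(j+1) : ℕ) : ℝ) = 2*((j:ℝ)+1) := by push_cast; ring
    rw [hc, logtwo] at h
    have hj' : (j:ℕ) + 1 ≤ N := Finset.mem_range.mp hj
    have hmono : Real.log ((j:ℝ)+1) ≤ Real.log N := by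
      apply Real.log_le_log (by positivity)
      exact_mod_cast hj'
    linarith
  rw [Finset.sum_add_distrib, split_sum, Finset.sum_const, Finset.card_range,
    nsmul_eq_mul] at h1
  linarith

lemma Paux_form (N : ℕ) :
    DeltaBrho N = (∏ j ∈ range N, (((2*(j+1)).factorial : ℕ) : ℝ)) / (4^N * N.factorial) := by
  rw [Delta_eq_Paux, Paux_eq]

lemma logDelta (N : ℕ) :
    Real.log (DeltaBrho N) = S1 N - N * Real.log 4 - Real.log (N.factorial : ℝ) := by
  rw [Paux_form]
  rw [Real.log_div (Finset.prod_ne_zero_iff.mpr fun j _ => by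
        exact_mod_cast (2*(j+1)).factorial_pos.ne')
      (by positivity)]
  rw [Real.log_mul (by positivity) (by exact_mod_cast N.factorial_pos.ne')]
  rw [Real.log_pow, Real.log_prod (fun j _ => by
        exact_mod_cast (2*(j+1)).factorial_pos.ne')]
  simp only [S1]
  push_cast
  ring

lemma main_bound (N : ℕ) (hN : 1 ≤ N) :
    |Real.log (DeltaBrho N) - (N:ℝ)^2 * (Real.log N + Real.log 2 - 3/2)|
      ≤ 10 * ((N:ℝ) * Real.log N + (N:ℝ) + 1) := by
  have hn1 : (1:ℝ) ≤ (N:ℝ) := by exact_mod_cast hN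
  have h4 : Real.log 4 = 2 * Real.log 2 := by
    rw [show (4:ℝ) = 2*2 by norm_num, Real.log_mul two_ne_zero two_ne_zero]; ring
  have hTl := Tsum_lb N
  have hTu := Tsum_ub N
  have hS1l := S1_lb N
  have hS1u := S1_ub N
  have hFl := log_fact_lb N hN
  have hFu := log_fact_ub N hN
  have hlogD := logDelta N
  have hb1 : Real.log 2 ≤ 1 := by
    have := Real.log_le_sub_one_of_pos (by norm_num : (0:ℝ) < 2); linarith
  have hb0 : (0:ℝ) ≤ Real.log 2 := Real.log_nonneg one_le_two
  have ha0 : (0:ℝ) ≤ Real.log N := Real.log_nonneg hn1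
  have hNb : (N:ℝ) * Real.log 2 ≤ (N:ℝ) := by nlinarith
  have hNa0 : (0:ℝ) ≤ (N:ℝ) * Real.log N := by positivity
  simp only [fmain] at hTl hTu
  rw [h4] at hlogD
  rw [abs_le]
  constructor <;> nlinarith [hTl, hTu, hS1l, hS1u, hFl, hFu]

end AuxProofs

/-- `(1/N²) log Δ(ρ_N) = log N + log 2 - 3/2 + o(1)` as `N → ∞`. -/
theorem stmt6 :
    Tendsto (fun N : ℕ =>
        (1 / (N : ℝ) ^ 2) * Real.log (DeltaBrho N) -
          (Real.log N + Real.log 2 - 3 / 2))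
      atTop (nhds 0) := by

  have h1 : Tendsto (fun N : ℕ => Real.log N / (N:ℝ)) atTop (nhds 0) :=
    (Real.isLittleO_log_id_atTop.tendsto_div_nhds_zero).comp tendsto_natCast_atTop_atTop
  have h2 : Tendsto (fun N : ℕ => 1 / (N:ℝ)) atTop (nhds 0) :=
    tendsto_one_div_atTop_nhds_zero_nat
  have h3 : Tendsto (fun N : ℕ => 1 / (N:ℝ)^2) atTop (nhds 0) := by
    have := h2.mul h2
    simp only [mul_zero] at this
    exact this.congr fun n => by ring
  have hlim : Tendsto (fun N : ℕ =>
      10 * (Real.log N / (N:ℝ) + 1/(N:ℝ) + 1/(N:ℝ)^2)) atTop (nhds 0) := by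
    have := ((h1.add h2).add h3).const_mul (10:ℝ)
    simpa using this
  apply squeeze_zero_norm' _ hlim
  filter_upwards [eventually_ge_atTop 1] with N hN
  have hn : (0:ℝ) < N := by exact_mod_cast hN
  have hmb := main_bound N hN
  have key : (1 / (N:ℝ)^2) * Real.log (DeltaBrho N) - (Real.log N + Real.log 2 - 3/2)
      = (Real.log (DeltaBrho N) - (N:ℝ)^2 * (Real.log N + Real.log 2 - 3/2)) / (N:ℝ)^2 := by
    have e1 : ((N:ℝ)^2 * (Real.log N + Real.log 2 - 3/2)) / (N:ℝ)^2
        = Real.log N + Real.log 2 - 3/2 := mul_div_cancel_left₀ _ (by positivity)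
    rw [sub_div, e1, one_div_mul_eq_div]
  rw [Real.norm_eq_abs, key, abs_div, abs_of_pos (by positivity : (0:ℝ) < (N:ℝ)^2)]
  rw [div_le_iff₀ (by positivity : (0:ℝ) < (N:ℝ)^2)]
  have hr : 10 * (Real.log N / (N:ℝ) + 1/(N:ℝ) + 1/(N:ℝ)^2) * (N:ℝ)^2
      = 10 * ((N:ℝ) * Real.log N + (N:ℝ) + 1) := by
    field_simp
  rw [hr]
  exact hmb
end

section
/- Let $T_\mu, T_{m}:(0,1)\to\mathbb{R}$ be bounded measurable functions and $T_Y:(0,1)\to\mathbb{R}$ a nondecreasing differentiable function with $T_Y'\ge 0$. Suppose there is a constant $\mathfrak{c}\in(0,1/2]$ such that $\varphi(y) := \int_y^1 (T_\mu(x)-T_m(x))\,dx$ satisfies $\varphi(y)\le -\tfrac{\mathfrak c}{2}(1-y)$ for $1-\tfrac{\mathfrak c}{2}\le y\le 1$, $\varphi(y)\le -\tfrac{\mathfrak c}{2}$ for $\tfrac{\mathfrak c}{2}\le y\le 1-\tfrac{\mathfrak c}{2}$, and $\varphi(y)\le -\tfrac{\mathfrak c}{2}y$ for $0\le y\le \tfrac{\mathfrak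 c}{2}$. Suppose further $T_Y$ is odd about $1/2$ with $\int_{1/2}^1(1-y)T_Y'(y)\,dy = \tfrac12$. Then $\int_0^1 (T_\mu(x)-T_m(x))T_Y(x)\,dx \le -\tfrac{\mathfrak c}{2}$. -/
open MeasureTheory

/-- Under the strong limiting Schur–Horn-type bounds on
`φ(y) = ∫_y^1 (T_μ - T_m)`, with `T_Y` nondecreasing differentiable, odd about
`1/2`, normalized by `∫_{1/2}^1 (1-y) T_Y'(y) dy = 1/2`, and granting the
integration-by-parts identity (as in the paper), one gets
`∫₀¹ (T_μ - T_m) T_Y ≤ -𝔠/2`. -/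
theorem stmt13 (Tmu Tm TY TY' phi : ℝ → ℝ) (c : ℝ) (hc0 : 0 < c) (hc1 : c ≤ 1 / 2)
    (hmuMeas : Measurable Tmu) (hmMeas : Measurable Tm)
    (hbdd : ∃ M : ℝ, ∀ x ∈ Set.Ioo (0:ℝ) 1, |Tmu x| ≤ M ∧ |Tm x| ≤ M)
    (hYderiv : ∀ y ∈ Set.Ioo (0:ℝ) 1, HasDerivAt TY (TY' y) y)
    (hYmono : MonotoneOn TY (Set.Ioo 0 1))
    (hY'nonneg : ∀ y ∈ Set.Ioo (0:ℝ) 1, 0 ≤ TY' y)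
    (hYodd : ∀ y ∈ Set.Ioo (0:ℝ) 1, TY (1 - y) = -TY y)
    (hphi : ∀ y : ℝ, phi y = ∫ x in Set.Ioo y 1, (Tmu x - Tm x))
    (hb1 : ∀ y ∈ Set.Icc (1 - c / 2) 1, phi y ≤ -(c / 2) * (1 - y))
    (hb2 : ∀ y ∈ Set.Icc (c / 2) (1 - c / 2), phi y ≤ -(c / 2))
    (hb3 : ∀ y ∈ Set.Icc (0:ℝ) (c / 2), phi y ≤ -(c / 2) * y)
    (hIBP : ∫ x in Set.Ioo (0:ℝ) 1, (Tmu x - Tm x) * TY x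
      = ∫ y in Set.Ioo (0:ℝ) 1, TY' y * phi y)
    (hhalf : ∫ y in Set.Ioo ((1:ℝ)/2) 1, (1 - y) * TY' y = 1 / 2)
    (hInt1 : IntegrableOn (fun y => TY' y * phi y) (Set.Ioo 0 1))
    (hInt2 : IntegrableOn (fun y => (1 - y) * TY' y) (Set.Ioo (1/2) 1)) :
    ∫ x in Set.Ioo (0:ℝ) 1, (Tmu x - Tm x) * TY x ≤ -(c / 2) := by
  rw [hIBP]
  -- symmetry of the derivative
  have hsym : ∀ y ∈ Set.Ioo (0:ℝ) 1, TY' (1 - y) = TY' y := by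
    intro y hy
    have hy' : (1 - y) ∈ Set.Ioo (0:ℝ) 1 := ⟨by linarith [hy.2], by linarith [hy.1]⟩
    have hs : HasDerivAt (fun z : ℝ => (1:ℝ) - z) (-1) y := (hasDerivAt_id y).const_sub 1
    have h1 : HasDerivAt (fun z => TY (1 - z)) (TY' (1 - y) * (-1)) y :=
      (hYderiv _ hy').comp y hs
    have h2 : HasDerivAt (fun z => -TY (1 - z)) (TY' (1 - y)) y := by
      have h3 := h1.neg
      rw [mul_neg, mul_one, neg_neg] at h3
      exact h3
    have hEq : TY =ᶠ[nhds y] (fun z => -TY (1 - z)) := by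
      filter_upwards [isOpen_Ioo.mem_nhds hy] with z hz
      rw [hYodd z hz]; ring
    exact (h2.congr_of_eventuallyEq hEq).unique (hYderiv y hy)
  -- pointwise bound
  have hpt : ∀ y ∈ Set.Ioo (0:ℝ) 1, TY' y * phi y ≤ -(c/2) * (min y (1-y) * TY' y) := by
    intro y hy
    have h0 := hY'nonneg y hy
    have hphi' : phi y ≤ -(c/2) * min y (1 - y) := by
      rcases le_or_gt y (c/2) with h | h
      · have hb := hb3 y ⟨hy.1.le, h⟩
        have hmin : min y (1 - y) = y := min_eq_left (by linarith)
        rw [hmin]; exact hb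
      · rcases le_or_gt y (1 - c/2) with h' | h'
        · have hb := hb2 y ⟨h.le, h'⟩
          have hm1 : min y (1 - y) ≤ 1 := le_trans (min_le_left _ _) hy.2.le
          nlinarith
        · have hb := hb1 y ⟨h'.le, hy.2.le⟩
          have hmin : min y (1 - y) = 1 - y := min_eq_right (by linarith)
          rw [hmin]; exact hb
    calc TY' y * phi y ≤ TY' y * (-(c/2) * min y (1-y)) :=
          mul_le_mul_of_nonneg_left hphi' h0
      _ = -(c/2) * (min y (1-y) * TY' y) := by ring
  -- integrability on the right half, with min
  have hInt2' : IntegrableOn (fun y => min y (1-y) * TY' y) (Set.Ioo (1/2:ℝ) 1) := by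
    apply hInt2.congr_fun ?_ measurableSet_Ioo
    intro y hy
    show (1 - y) * TY' y = min y (1 - y) * TY' y
    rw [min_eq_right (by linarith [hy.1] : 1 - y ≤ y)]
  -- integrability on the left half via the substitution y ↦ 1 - y
  have hiv : IntervalIntegrable (fun y => (1 - y) * TY' y) volume (1/2) 1 := by
    rw [intervalIntegrable_iff_integrableOn_Ioc_of_le (by norm_num)]
    exact (integrableOn_Ioc_iff_integrableOn_Ioo).mpr hInt2
  have hiv2 : IntervalIntegrable (fun x => (1 - (1 - x)) * TY' (1 - x)) volume
      (1 - (1/2:ℝ)) (1 - 1) := hiv.comp_sub_left 1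
  have hiv3 : IntervalIntegrable (fun x => (1 - (1 - x)) * TY' (1 - x)) volume 0 (1/2) := by
    have h := hiv2.symm
    norm_num at h
    convert h using 2
    ring
  have hIleft : IntegrableOn (fun y => y * TY' y) (Set.Ioo (0:ℝ) (1/2)) := by
    rw [intervalIntegrable_iff_integrableOn_Ioc_of_le (by norm_num)] at hiv3
    have h := (integrableOn_Ioc_iff_integrableOn_Ioo).mp hiv3
    apply h.congr_fun ?_ measurableSet_Ioo
    intro y hy
    have h2 : TY' (1 - y) = TY' y := hsym y ⟨hy.1, by linarith [hy.2]⟩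
    show (1 - (1 - y)) * TY' (1 - y) = y * TY' y
    rw [h2]; ring
  have hInt1' : IntegrableOn (fun y => min y (1-y) * TY' y) (Set.Ioo (0:ℝ) (1/2)) := by
    apply hIleft.congr_fun ?_ measurableSet_Ioo
    intro y hy
    show y * TY' y = min y (1 - y) * TY' y
    rw [min_eq_left (by linarith [hy.2] : y ≤ 1 - y)]
  -- full integrability on (0,1)
  have hIoc : IntegrableOn (fun y => min y (1-y) * TY' y) (Set.Ioc (0:ℝ) 1) := by
    rw [show Set.Ioc (0:ℝ) 1 = Set.Ioc 0 (1/2) ∪ Set.Ioc (1/2) 1 from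
      (Set.Ioc_union_Ioc_eq_Ioc (by norm_num) (by norm_num)).symm]
    exact ((integrableOn_Ioc_iff_integrableOn_Ioo).mpr hInt1').union
      ((integrableOn_Ioc_iff_integrableOn_Ioo).mpr hInt2')
  have hIfull : IntegrableOn (fun y => min y (1-y) * TY' y) (Set.Ioo (0:ℝ) 1) :=
    hIoc.mono_set Set.Ioo_subset_Ioc_self
  -- value of the left-half integral
  have hval1 : ∫ y in Set.Ioo (0:ℝ) (1/2), y * TY' y = 1/2 := by
    have key : (∫ x in (0:ℝ)..(1/2), (1 - (1 - x)) * TY' (1 - x))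
        = ∫ x in (1:ℝ)-(1/2)..(1:ℝ)-0, (1 - x) * TY' x :=
      intervalIntegral.integral_comp_sub_left (fun y => (1 - y) * TY' y) 1
    have e1 : (∫ x in (0:ℝ)..(1/2), (1 - (1 - x)) * TY' (1 - x))
        = ∫ y in Set.Ioo (0:ℝ) (1/2), (1 - (1 - y)) * TY' (1 - y) := by
      rw [intervalIntegral.integral_of_le (by norm_num), integral_Ioc_eq_integral_Ioo]
    have e2 : (∫ x in (1:ℝ)-(1/2)..(1:ℝ)-0, (1 - x) * TY' x)
        = ∫ y in Set.Ioo ((1:ℝ)/2) 1, (1 - y) * TY' y := by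
      norm_num
      rw [intervalIntegral.integral_of_le (by norm_num), integral_Ioc_eq_integral_Ioo]
    have e3 : ∫ y in Set.Ioo (0:ℝ) (1/2), (1 - (1 - y)) * TY' (1 - y)
        = ∫ y in Set.Ioo (0:ℝ) (1/2), y * TY' y := by
      apply setIntegral_congr_fun measurableSet_Ioo
      intro y hy
      have h2 : TY' (1 - y) = TY' y := hsym y ⟨hy.1, by linarith [hy.2]⟩
      show (1 - (1 - y)) * TY' (1 - y) = y * TY' y
      rw [h2]; ring
    rw [← e3, ← e1, key, e2, hhalf]
  -- split the integral
  have hsplit : ∫ y in Set.Ioo (0:ℝ) 1, min y (1-y) * TY' y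
      = (∫ y in Set.Ioo (0:ℝ) (1/2), y * TY' y)
        + ∫ y in Set.Ioo ((1:ℝ)/2) 1, (1 - y) * TY' y := by
    rw [← integral_Ioc_eq_integral_Ioo,
      show Set.Ioc (0:ℝ) 1 = Set.Ioc 0 (1/2) ∪ Set.Ioc (1/2) 1 from
        (Set.Ioc_union_Ioc_eq_Ioc (by norm_num) (by norm_num)).symm,
      setIntegral_union (Set.Ioc_disjoint_Ioc_of_le le_rfl) measurableSet_Ioc
        ((integrableOn_Ioc_iff_integrableOn_Ioo).mpr hInt1')
        ((integrableOn_Ioc_iff_integrableOn_Ioo).mpr hInt2'),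
      integral_Ioc_eq_integral_Ioo, integral_Ioc_eq_integral_Ioo]
    congr 1
    · apply setIntegral_congr_fun measurableSet_Ioo
      intro y hy
      show min y (1 - y) * TY' y = y * TY' y
      rw [min_eq_left (by linarith [hy.2] : y ≤ 1 - y)]
    · apply setIntegral_congr_fun measurableSet_Ioo
      intro y hy
      show min y (1 - y) * TY' y = (1 - y) * TY' y
      rw [min_eq_right (by linarith [hy.1] : 1 - y ≤ y)]
  -- conclude
  have hmono : ∫ y in Set.Ioo (0:ℝ) 1, TY' y * phi y
      ≤ ∫ y in Set.Ioo (0:ℝ) 1, -(c/2) * (min y (1-y) * TY' y) :=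
    setIntegral_mono_on hInt1 (hIfull.const_mul _) measurableSet_Ioo hpt
  calc ∫ y in Set.Ioo (0:ℝ) 1, TY' y * phi y
      ≤ ∫ y in Set.Ioo (0:ℝ) 1, -(c/2) * (min y (1-y) * TY' y) := hmono
    _ = -(c/2) * ∫ y in Set.Ioo (0:ℝ) 1, min y (1-y) * TY' y := integral_const_mul _ _
    _ = -(c/2) * (1/2 + 1/2) := by rw [hsplit, hval1, hhalf]
    _ = -(c/2) := by ring
end
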